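/- Let f : ℝⁿ → ℝ be C² with local minimum x̄, value f*, and solution set S. Suppose the error bound μ·dist(x,S) ≤ ‖∇f(x)‖ holds for all x in a neighborhood of x̄ with μ > 0. Then for every μ' < μ there is a neighborhood of x̄ on which the Polyak–Łojasiewicz inequality f(x) - f* ≤ (1/(2μ'))‖∇f(x)‖² holds. -/

import Mathlib

open Metric Filter Topology

lemma taylor_unif {n : ℕ}
    (f' : EuclideanSpace ℝ (Fin n) → (EuclideanSpace ℝ (Fin n) →L[ℝ] ℝ))
    (hf' : ContDiff ℝ 1 f') (xb : EuclideanSpace ℝ (Fin n)) {ε : ℝ} (hε : 0 < ε) :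
    ∃ δ > 0, ∀ z ∈ ball xb δ, ∀ y ∈ ball xb δ,
      ‖f' y - f' z - (fderiv ℝ f' z) (y - z)‖ ≤ ε * ‖y - z‖ := by
  have hcont : Continuous (fderiv ℝ f') := ((hf'.fderiv_right (m := 0) (by norm_num)).continuous)
  have hdiff : Differentiable ℝ f' := hf'.differentiable (by norm_num)
  have hK : IsCompact (closedBall xb 1) := isCompact_closedBall _ _
  have hu := hK.uniformContinuousOn_of_continuous (f := fderiv ℝ f') hcont.continuousOn
  replace hu := (Metric.uniformContinuousOn_iff (α := EuclideanSpace ℝ (Fin n)) (β := EuclideanSpace ℝ (Fin n) →L[ℝ] EuclideanSpace ℝ (Fin n) →L[ℝ] ℝ)).mp hu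
  obtain ⟨δ₀, hδ₀, hδ⟩ := hu ε hε
  refine ⟨min (δ₀/2) (1/2), by positivity, ?_⟩
  set δ := min (δ₀/2) (1/2) with hδdef
  intro z hz y hy
  set B := fderiv ℝ f' z with hB
  have hsub : ball xb δ ⊆ closedBall xb 1 := by
    intro u hu
    have : dist u xb < δ := mem_ball.mp hu
    exact mem_closedBall.mpr (le_trans this.le (le_trans (min_le_right _ _) (by norm_num)))
  have key : ∀ u ∈ ball xb δ, ‖fderiv ℝ (fun w => f' w - B w) u‖ ≤ ε := by
    intro u hu
    have h1 : fderiv ℝ (fun w => f' w - B w) u = fderiv ℝ f' u - B := by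
      rw [fderiv_fun_sub (hdiff u) B.differentiableAt, B.fderiv]
    rw [h1]
    have hdist : dist u z < δ₀ := by
      have h2 : dist u xb < δ := mem_ball.mp hu
      have h3 : dist z xb < δ := mem_ball.mp hz
      have h4 : δ ≤ δ₀/2 := min_le_left _ _
      calc dist u z ≤ dist u xb + dist z xb := dist_triangle_right _ _ _
        _ < δ₀ := by linarith
    have := hδ u (hsub hu) z (hsub hz) hdist
    rw [dist_eq_norm (fderiv ℝ f' u) (fderiv ℝ f' z)] at this
    exact this.le
  have := Convex.norm_image_sub_le_of_norm_fderiv_le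
    (f := fun w => f' w - B w) (C := ε) (s := ball xb δ)
    (fun u hu => (hdiff u).sub B.differentiableAt) key (convex_ball _ _) hz hy
  calc ‖f' y - f' z - B (y - z)‖ = ‖(f' y - B y) - (f' z - B z)‖ := by
        rw [map_sub]; abel_nf
    _ ≤ ε * ‖y - z‖ := this

set_option maxHeartbeats 1000000 in
/-- Error bound implies PL for C² functions, with arbitrarily small loss in the constant. -/
theorem eb_implies_pl {n : ℕ}
    (f : EuclideanSpace ℝ (Fin n) → ℝ) (xb : EuclideanSpace ℝ (Fin n))
    (hf : ContDiff ℝ 2 f) (hmin : IsLocalMin f xb)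
    (μ : ℝ) (hμ : 0 < μ)
    (S : Set (EuclideanSpace ℝ (Fin n)))
    (hS : S = {y | IsLocalMin f y ∧ f y = f xb})
    (hEB : ∀ᶠ x in 𝓝 xb, μ * Metric.infDist x S ≤ ‖gradient f x‖) :
    ∀ μ', 0 < μ' → μ' < μ →
      ∀ᶠ x in 𝓝 xb, f x - f xb ≤ (1 / (2 * μ')) * ‖gradient f x‖ ^ 2 := by
  intro μ' hμ'0 hμ'μ
  set f' : EuclideanSpace ℝ (Fin n) → (EuclideanSpace ℝ (Fin n) →L[ℝ] ℝ) := fderiv ℝ f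
    with hf'def
  have hf'c : ContDiff ℝ 1 f' := hf.fderiv_right (m := 1) (by norm_num)
  have hfd : Differentiable ℝ f := hf.differentiable (by norm_num)
  have hgradnorm : ∀ x, ‖gradient f x‖ = ‖f' x‖ := fun x => by simp [gradient, hf'def]
  have hxbS : xb ∈ S := by rw [hS]; exact ⟨hmin, rfl⟩
  have hSne : S.Nonempty := ⟨xb, hxbS⟩
  have hgrad0 : ∀ y ∈ S, f' y = 0 := by
    intro y hy; rw [hS] at hy; exact hy.1.fderiv_eq_zero
  have hfS : ∀ y ∈ S, f y = f xb := by intro y hy; rw [hS] at hy; exact hy.2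
  have hμ'ne : μ' ≠ 0 := ne_of_gt hμ'0
  have hμne : μ ≠ 0 := ne_of_gt hμ
  set a : ℝ := 1/(2*μ') - 1/(2*μ) with ha_def
  have ha : 0 < a := by
    rw [ha_def, sub_pos]
    apply one_div_lt_one_div_of_lt <;> linarith
  set θ : ℝ := μ * a with hθ_def
  have hθ : 0 < θ := mul_pos hμ ha
  have h1θ : (0:ℝ) < 1 + θ := by linarith
  set ε : ℝ := a * μ^2 / (3 * (1+θ)^2) with hε_def
  have hε : 0 < ε := by positivity
  obtain ⟨δ, hδpos, hTay⟩ := taylor_unif f' hf'c xb hε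
  obtain ⟨r₀, hr₀, hEB'⟩ := Metric.eventually_nhds_iff_ball.mp hEB
  set r : ℝ := min (δ / (4*(1+θ))) r₀ with hr_def
  have hrpos : 0 < r := lt_min (by positivity) hr₀
  have hr4 : 4*(1+θ)*r ≤ δ := by
    have : r ≤ δ / (4*(1+θ)) := min_le_left _ _
    rw [le_div_iff₀ (by positivity)] at this
    linarith
  rw [Metric.eventually_nhds_iff_ball]
  refine ⟨r, hrpos, ?_⟩
  intro x hx
  have hxr : dist x xb < r := mem_ball.mp hx
  have hEBx : μ * infDist x S ≤ ‖gradient f x‖ :=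
    hEB' x (mem_ball.mpr (lt_of_lt_of_le hxr (min_le_right _ _)))
  set G := ‖gradient f x‖ with hG_def
  have hGf : G = ‖f' x‖ := hgradnorm x
  have hG0 : 0 ≤ G := norm_nonneg _
  rcases eq_or_lt_of_le (infDist_nonneg (s := S) (x := x)) with h0 | hpos
  · have hxc : x ∈ closure S := (mem_closure_iff_infDist_zero hSne).2 h0.symm
    have hfx : f x = f xb := by
      have hcl : IsClosed {y | f y = f xb} := isClosed_eq hf.continuous continuous_const
      exact closure_minimal hfS hcl hxc
    rw [hfx, sub_self]
    positivity
  · obtain ⟨xp, hxpS, hxpd⟩ := (infDist_lt_iff hSne).1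
      (show infDist x S < (1+θ) * infDist x S by nlinarith)
    set d := x - xp with hd_def
    have hdn : ‖d‖ = dist x xp := (dist_eq_norm x xp).symm
    set D := ‖d‖ with hD_def
    have hD0 : 0 ≤ D := norm_nonneg _
    have hDI : D ≤ (1+θ) * infDist x S := by rw [hdn]; exact hxpd.le
    have hIxb : infDist x S ≤ dist x xb := infDist_le_dist_of_mem hxbS
    have hθr : 0 < θ * r := mul_pos hθ hrpos
    have hX : (1+θ) * r = r + θ * r := by ring
    have hDr : D < (1+θ) * r := by
      have hIr : infDist x S < r := lt_of_le_of_lt hIxb hxr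
      have := mul_lt_mul_of_pos_left hIr h1θ
      linarith
    have hP : dist xp xb ≤ D + dist x xb := by
      have h2 : dist xp xb ≤ dist xp x + dist x xb := dist_triangle _ _ _
      have h3 : dist xp x = D := by rw [dist_comm, ← hdn]
      linarith
    have hPD : dist xp xb + D < δ := by linarith
    have hxδ : x ∈ ball xb δ := by
      rw [mem_ball]
      linarith
    have hxpδ : xp ∈ ball xb δ := by rw [mem_ball]; linarith
    have huδ : ∀ t ∈ Set.Icc (0:ℝ) 1, xp + t • d ∈ ball xb δ := by
      intro t ht
      rw [mem_ball, dist_eq_norm]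
      have : ‖xp + t • d - xb‖ ≤ ‖xp - xb‖ + t * D := by
        calc ‖xp + t • d - xb‖ = ‖(xp - xb) + t • d‖ := by
              rw [add_sub_right_comm]
          _ ≤ ‖xp - xb‖ + ‖t • d‖ := norm_add_le _ _
          _ = ‖xp - xb‖ + t * D := by
              rw [norm_smul, Real.norm_eq_abs, abs_of_nonneg ht.1]
      have h4 : ‖xp - xb‖ = dist xp xb := (dist_eq_norm _ _).symm
      have h5 : t * D ≤ D := by nlinarith [ht.1, ht.2]
      linarith
    set B := fderiv ℝ f' xp with hB_def
    have hT2 : ∀ t ∈ Set.Icc (0:ℝ) 1, ‖f' (xp + t • d) - B (t • d)‖ ≤ ε * (t * D) := by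
      intro t ht
      have := hTay xp hxpδ (xp + t • d) (huδ t ht)
      rw [hgrad0 xp hxpS, sub_zero, add_sub_cancel_left] at this
      rwa [norm_smul, Real.norm_eq_abs, abs_of_nonneg ht.1] at this
    have hxpd_eq : xp + d = x := by rw [hd_def]; abel
    have hT1 : ‖f' x - B d‖ ≤ ε * D := by
      have h := hT2 1 (by norm_num)
      simp only [one_smul, one_mul] at h
      rwa [hxpd_eq] at h
    set c : ℝ := (B d) d with hc_def
    set g : ℝ → ℝ := fun t => f (xp + t • d) - t^2/2 * c with hg_def
    have hg : ∀ t : ℝ, HasDerivAt g ((f' (xp + t • d)) d - t * c) t := by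
      intro t
      have h1 : HasDerivAt (fun s : ℝ => xp + s • d) d t := by
        simpa using ((hasDerivAt_id t).smul_const d).const_add xp
      have h2 : HasDerivAt (fun s : ℝ => f (xp + s • d)) ((f' (xp + t • d)) d) t :=
        (hfd (xp + t • d)).hasFDerivAt.comp_hasDerivAt t h1
      have h3 : HasDerivAt (fun s : ℝ => s^2/2 * c) (t * c) t := by
        have := ((hasDerivAt_pow 2 t).div_const 2).mul_const c
        refine this.congr_deriv ?_
        push_cast; ring
      exact h2.sub h3
    have hbound : ∀ t ∈ Set.Ico (0:ℝ) 1, ‖(f' (xp + t • d)) d - t * c‖ ≤ ε * D^2 := by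
      intro t ht
      have heq : (f' (xp + t • d)) d - t * c = (f' (xp + t • d) - B (t • d)) d := by
        rw [hc_def]
        simp [ContinuousLinearMap.sub_apply, map_smul, ContinuousLinearMap.smul_apply,
          smul_eq_mul]
      rw [heq]
      calc ‖(f' (xp + t • d) - B (t • d)) d‖
          ≤ ‖f' (xp + t • d) - B (t • d)‖ * D := (f' (xp + t • d) - B (t • d)).le_opNorm d
        _ ≤ (ε * (t * D)) * D :=
            mul_le_mul_of_nonneg_right (hT2 t ⟨ht.1, ht.2.le⟩) hD0
        _ ≤ ε * D^2 := by
            nlinarith [mul_nonneg hε.le (mul_nonneg hD0 hD0), sub_nonneg.mpr ht.2.le, ht.1]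
    have hmvt : ‖g 1 - g 0‖ ≤ ε * D^2 * (1 - 0) :=
      norm_image_sub_le_of_norm_deriv_le_segment'
        (fun t _ => (hg t).hasDerivWithinAt) hbound 1 (Set.right_mem_Icc.2 zero_le_one)
    have hg1 : g 1 = f x - (1/2) * c := by
      rw [hg_def]
      simp only [one_pow]
      rw [one_smul, hxpd_eq]
    have hg0 : g 0 = f xb := by
      rw [hg_def]; simp [hfS xp hxpS]
    have hkey : f x - f xb ≤ (1/2) * c + ε * D^2 := by
      have h5 : g 1 - g 0 ≤ ε * D^2 := by
        have := le_trans (le_abs_self _) hmvt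
        simpa using this
      rw [hg1, hg0] at h5
      linarith
    have hcle : c ≤ ‖B d‖ * D := le_trans (le_abs_self _) ((B d).le_opNorm d)
    have hBd : ‖B d‖ ≤ ‖f' x‖ + ε * D := by
      have h6 : ‖B d‖ - ‖f' x‖ ≤ ‖B d - f' x‖ := norm_sub_norm_le _ _
      rw [norm_sub_rev] at h6
      linarith
    set k : ℝ := (1+θ)/μ with hk_def
    have hk0 : 0 < k := by positivity
    have hDk : D ≤ k * G := by
      rw [hk_def, div_mul_eq_mul_div, le_div_iff₀ hμ]
      calc D * μ ≤ ((1+θ) * infDist x S) * μ := mul_le_mul_of_nonneg_right hDI hμ.le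
        _ = (1+θ) * (μ * infDist x S) := by ring
        _ ≤ (1+θ) * G := mul_le_mul_of_nonneg_left hEBx h1θ.le
    have h1θne : (1:ℝ) + θ ≠ 0 := ne_of_gt h1θ
    have e3 : (3/2) * ε * k^2 = a/2 := by
      rw [hε_def, hk_def]
      field_simp
    have e4 : k/2 = 1/(2*μ) + a/2 := by
      rw [hk_def, hθ_def]
      field_simp
    have hid : k/2 + (3/2) * ε * k^2 = 1/(2*μ') := by
      rw [e3, e4, ha_def]
      ring
    have hmain : f x - f xb ≤ (1/2) * (‖f' x‖ + ε * D) * D + ε * D^2 := by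
      have h7 : (1/2) * c ≤ (1/2) * (‖B d‖ * D) := by linarith
      have h8 : ‖B d‖ * D ≤ (‖f' x‖ + ε * D) * D := mul_le_mul_of_nonneg_right hBd hD0
      linarith
    have hD2 : D^2 ≤ (k*G)^2 := by
      have h10 : 0 ≤ k * G := by positivity
      calc D^2 = D * D := sq D
        _ ≤ (k*G) * (k*G) := mul_le_mul hDk hDk hD0 h10
        _ = (k*G)^2 := (sq (k*G)).symm
    have hGD : ‖f' x‖ * D ≤ G * (k * G) := by
      rw [← hGf]
      exact mul_le_mul_of_nonneg_left hDk hG0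
    calc f x - f xb ≤ (1/2) * (‖f' x‖ + ε * D) * D + ε * D^2 := hmain
      _ = (1/2) * (‖f' x‖ * D) + (3/2) * ε * D^2 := by ring
      _ ≤ (1/2) * (G * (k * G)) + (3/2) * ε * (k*G)^2 := by
          have h9 : (3/2) * ε * D^2 ≤ (3/2) * ε * (k*G)^2 :=
            mul_le_mul_of_nonneg_left hD2 (by positivity)
          linarith
      _ = (k/2 + (3/2) * ε * k^2) * G^2 := by ring
      _ = (1/(2*μ')) * G^2 := by rw [hid]
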